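/- Let {A_ξ : ξ < ω₁} be an almost disjoint family of infinite subsets of ℕ and suppose there is a ⊆*-increasing sequence (V_α)_{α<ω₁} of subsets of ℕ such that A_ξ ⊆* V_α for ξ < α and A_ξ ∩ V_α finite for α ≤ ξ < ω₁. Then there exists a coherent family {s_α : α < ω₁} (s_α : ω·α → ω injective with s_α|_{ω·β} =* s_β for β < α) such that A_ξ =* s_{ξ+1}[[ω·ξ, ω·ξ + ω)] for every ξ < ω₁. -/

import Mathlib

noncomputable section

open Set
open scoped Ordinal

/-- The first uncountable ordinal `ω₁`. -/
def omega1 : Ordinal := (Cardinal.aleph 1).ord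

/-- `{s_α : α < ω₁}` is a coherent family: each `s_α` is injective on `ω·α`
(the set of ordinals `< ω·α`) and `s_α` agrees with `s_β` on `ω·β` except at
finitely many points, for all `β < α < ω₁`. -/
def IsCoherentFamily (s : Ordinal → Ordinal → ℕ) : Prop :=
  ∀ α < omega1,
    Set.InjOn (s α) (Set.Iio (Ordinal.omega0 * α)) ∧
    ∀ β < α, {γ : Ordinal | γ < Ordinal.omega0 * β ∧ s α γ ≠ s β γ}.Finite

/-- `A =* B`: the symmetric difference of `A, B ⊆ ℕ` is finite. -/
def EqStar (A B : Set ℕ) : Prop := ((A \ B) ∪ (B \ A)).Finite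


/-- Strong recursion on ℕ producing data. -/
noncomputable def natSRec {T : Type*} (d : T) (step : ℕ → (ℕ → T) → T) : ℕ → T
  | k => step k (fun j => if _h : j < k then natSRec d step j else d)
termination_by k => k
decreasing_by exact _h

theorem natSRec_eq {T : Type*} (d : T) (step : ℕ → (ℕ → T) → T) (k : ℕ) :
    natSRec d step k = step k (fun j => if _h : j < k then natSRec d step j else d) := by
  rw [natSRec]

theorem exists_injOn_into {ι : Type*} {M : Set ι} (hM : M.Finite) {Q : Set ℕ} (hQ : Q.Infinite) :
    ∃ ρ : ι → ℕ, Set.InjOn ρ M ∧ ρ '' M ⊆ Q := by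
  classical
  haveI := hM.to_subtype
  obtain ⟨fM, hfM⟩ := (exists_injective_nat ↥M)
  let e := hQ.natEmbedding
  refine ⟨fun x => if h : x ∈ M then (e (fM ⟨x, h⟩) : ℕ) else 0, ?_, ?_⟩
  · intro x hx y hy hxy
    simp only [dif_pos hx, dif_pos hy] at hxy
    have := hfM (e.injective (Subtype.ext hxy))
    exact congrArg Subtype.val this
  · rintro _ ⟨x, hx, rfl⟩
    simp only [dif_pos hx]
    exact (e (fM ⟨x, hx⟩)).2

section AmalgSec

variable {ι : Type*} (g : ℕ → ι → ℕ) (D : ℕ → Set ι) (W : Set ℕ) (P : ℕ → Set ℕ)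

/-- The `k`-th layer: points appearing first in `D k`. -/
def Lam (k : ℕ) : Set ι := {x | x ∈ D k ∧ ∀ j < k, x ∉ D j}

/-- Points of layer `k` that must be repaired, given the bad value set `B`. -/
def Mdef (k : ℕ) (B : Set ℕ) : Set ι :=
  {x | x ∈ Lam D k ∧ (g (k + 1) x ∈ B ∨ g (k + 1) x ∉ W)}

open Classical in
/-- A chosen injective repair function on `Mdef`, mapping into `P k \ B`. -/
noncomputable def rdef (k : ℕ) (B : Set ℕ) : ι → ℕ :=
  if h : ∃ ρ : ι → ℕ, Set.InjOn ρ (Mdef g D W k B) ∧ ρ '' (Mdef g D W k B) ⊆ P k \ B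
  then h.choose else fun _ => 0

/-- Bad values at stage `k`, given all earlier data. -/
def Bfun (prev : ℕ → Set ι × (ι → ℕ)) (k : ℕ) : Set ℕ :=
  ⋃ j ∈ Finset.range k,
    ((prev j).2 '' (prev j).1 ∪ g (j + 1) '' {x | x ∈ D (j + 1) ∧ g (k + 1) x ≠ g (j + 1) x})

/-- The recursively constructed repair data. -/
noncomputable def Phi : ℕ → Set ι × (ι → ℕ) :=
  natSRec (∅, fun _ => 0) fun k prev =>
    (Mdef g D W k (Bfun g D prev k), rdef g D W P k (Bfun g D prev k))

theorem Bfun_congr {p q : ℕ → Set ι × (ι → ℕ)} (k : ℕ) (h : ∀ j < k, p j = q j) :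
    Bfun g D p k = Bfun g D q k := by
  unfold Bfun
  refine Set.iUnion₂_congr ?_
  intro j hj
  rw [h j (Finset.mem_range.mp hj)]

theorem Phi_eq (k : ℕ) :
    Phi g D W P k = (Mdef g D W k (Bfun g D (Phi g D W P) k),
      rdef g D W P k (Bfun g D (Phi g D W P) k)) := by
  have h1 : Bfun g D (fun j => if _h : j < k then Phi g D W P j else (∅, fun _ => 0)) k
      = Bfun g D (Phi g D W P) k :=
    Bfun_congr g D k fun j hj => dif_pos hj
  show natSRec _ _ k = _
  rw [natSRec_eq]
  beta_reduce
  unfold Phi at h1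
  rw [h1]
  rfl

theorem Phi_inv
    (hD : ∀ k, D k ⊆ D (k + 1))
    (hinj : ∀ k, Set.InjOn (g k) (D k))
    (hcoh : ∀ m k, m ≤ k → {x | x ∈ D m ∧ g k x ≠ g m x}.Finite)
    (hWk : ∀ k, (g k '' D k \ W).Finite)
    (hPinf : ∀ k, (P k).Infinite) (k : ℕ) :
    (Bfun g D (Phi g D W P) k).Finite ∧ ((Phi g D W P k).1).Finite ∧
      Set.InjOn ((Phi g D W P k).2) ((Phi g D W P k).1) ∧
      (Phi g D W P k).2 '' (Phi g D W P k).1 ⊆ P k \ Bfun g D (Phi g D W P) k := by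
  induction k using Nat.strong_induction_on with
  | _ k IH =>
  have hBf : (Bfun g D (Phi g D W P) k).Finite := by
    apply Set.Finite.biUnion (Finset.range k).finite_toSet
    intro j hj
    have hj' : j < k := Finset.mem_range.mp hj
    exact ((IH j hj').2.1.image _).union ((hcoh (j + 1) (k + 1) (by omega)).image _)
  refine ⟨hBf, ?_⟩
  have hMk : (Phi g D W P k).1 = Mdef g D W k (Bfun g D (Phi g D W P) k) :=
    congrArg Prod.fst (Phi_eq g D W P k)
  have hMf : ((Phi g D W P k).1).Finite := by
    rw [hMk]
    have hsub : Mdef g D W k (Bfun g D (Phi g D W P) k) ⊆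
        {x | x ∈ D (k + 1) ∧ g (k + 1) x ∈ Bfun g D (Phi g D W P) k} ∪
        {x | x ∈ D (k + 1) ∧ g (k + 1) x ∈ g (k + 1) '' D (k + 1) \ W} := by
      rintro x ⟨hxL, hx⟩
      have hxD : x ∈ D (k + 1) := hD k hxL.1
      rcases hx with hx | hx
      · exact Or.inl ⟨hxD, hx⟩
      · exact Or.inr ⟨hxD, ⟨x, hxD, rfl⟩, hx⟩
    refine Set.Finite.subset (Set.Finite.union ?_ ?_) hsub
    · refine Set.Finite.of_finite_image (f := g (k + 1)) (hBf.subset ?_)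
        ((hinj (k + 1)).mono fun x hx => hx.1)
      rintro _ ⟨x, hx, rfl⟩; exact hx.2
    · refine Set.Finite.of_finite_image (f := g (k + 1)) ((hWk (k + 1)).subset ?_)
        ((hinj (k + 1)).mono fun x hx => hx.1)
      rintro _ ⟨x, hx, rfl⟩; exact hx.2
  have hQ : (P k \ Bfun g D (Phi g D W P) k).Infinite := (hPinf k).diff hBf
  have hex : ∃ ρ : ι → ℕ, Set.InjOn ρ (Mdef g D W k (Bfun g D (Phi g D W P) k)) ∧
      ρ '' (Mdef g D W k (Bfun g D (Phi g D W P) k)) ⊆ P k \ Bfun g D (Phi g D W P) k := by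
    refine exists_injOn_into ?_ hQ
    rwa [hMk] at hMf
  have hρk : (Phi g D W P k).2 = rdef g D W P k (Bfun g D (Phi g D W P) k) :=
    congrArg Prod.snd (Phi_eq g D W P k)
  have hspec := hex.choose_spec
  have hrd : rdef g D W P k (Bfun g D (Phi g D W P) k) = hex.choose := dif_pos hex
  refine ⟨hMf, ?_, ?_⟩
  · rw [hρk, hrd, hMk]; exact hspec.1
  · rw [hρk, hrd, hMk]; exact hspec.2

theorem amalg
    (hD : ∀ k, D k ⊆ D (k + 1))
    (hinj : ∀ k, Set.InjOn (g k) (D k))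
    (hcoh : ∀ m k, m ≤ k → {x | x ∈ D m ∧ g k x ≠ g m x}.Finite)
    (hWk : ∀ k, (g k '' D k \ W).Finite)
    (hPinf : ∀ k, (P k).Infinite)
    (hPW : ∀ k, P k ⊆ W)
    (hPg : ∀ k, Disjoint (P k) (g (k + 1) '' D (k + 1))) :
    ∃ G : ι → ℕ, Set.InjOn G (⋃ k, D k) ∧ (∀ k, {x | x ∈ D k ∧ G x ≠ g k x}.Finite) ∧
      G '' (⋃ k, D k) ⊆ W := by
  classical
  have hDm : ∀ {m k : ℕ}, m ≤ k → D m ⊆ D k := fun {m k} h =>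
    monotone_nat_of_le_succ (f := D) hD h
  set M : ℕ → Set ι := fun k => (Phi g D W P k).1 with hMdef
  set ρ : ℕ → ι → ℕ := fun k => (Phi g D W P k).2 with hρdef
  set B : ℕ → Set ℕ := fun k => Bfun g D (Phi g D W P) k with hBdef
  have hInv := Phi_inv g D W P hD hinj hcoh hWk hPinf
  have hMmem : ∀ k x, x ∈ M k ↔ x ∈ Lam D k ∧ (g (k + 1) x ∈ B k ∨ g (k + 1) x ∉ W) := by
    intro k x
    have e : M k = Mdef g D W k (B k) := congrArg Prod.fst (Phi_eq g D W P k)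
    rw [e]
    exact Iff.rfl
  have hBsub1 : ∀ j k, j < k → ρ j '' M j ⊆ B k := by
    intro j k hjk
    intro v hv
    refine Set.mem_biUnion (Finset.mem_range.mpr hjk) (Or.inl hv)
  have hBsub2 : ∀ j k, j < k →
      g (j + 1) '' {x | x ∈ D (j + 1) ∧ g (k + 1) x ≠ g (j + 1) x} ⊆ B k := by
    intro j k hjk v hv
    exact Set.mem_biUnion (Finset.mem_range.mpr hjk) (Or.inr hv)
  -- the amalgamated function
  set G : ι → ℕ := fun x =>
    if h : ∃ k, x ∈ D k then
      (if x ∈ M (Nat.find h) then ρ (Nat.find h) x else g (Nat.find h + 1) x)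
    else 0 with hGdef
  have hLamFind : ∀ (x : ι) (h : ∃ k, x ∈ D k), x ∈ Lam D (Nat.find h) :=
    fun x h => ⟨Nat.find_spec h, fun j hj => Nat.find_min h hj⟩
  have hfind : ∀ (x : ι) (k : ℕ), x ∈ Lam D k → ∀ (h : ∃ k, x ∈ D k), Nat.find h = k := by
    intro x k hx h
    refine le_antisymm (Nat.find_le hx.1) ?_
    by_contra hlt
    exact hx.2 _ (Nat.lt_of_not_le hlt) (Nat.find_spec h)
  have hGval : ∀ (x : ι) (k : ℕ), x ∈ Lam D k →
      G x = if x ∈ M k then ρ k x else g (k + 1) x := by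
    intro x k hx
    have h : ∃ k, x ∈ D k := ⟨k, hx.1⟩
    rw [hGdef]
    simp only [dif_pos h]
    rw [hfind x k hx h]
  -- main collision analysis
  have hρPB : ∀ k x, x ∈ M k → ρ k x ∈ P k \ B k := fun k x hx =>
    (hInv k).2.2.2 ⟨x, hx, rfl⟩
  have hMain : ∀ k m, k ≤ m → ∀ x, x ∈ Lam D k → ∀ y, y ∈ Lam D m → G x = G y → x = y := by
    intro k m hkm x hx y hy hG
    rw [hGval x k hx, hGval y m hy] at hG
    have hxk1 : x ∈ D (k + 1) := hD k hx.1
    have hxm1 : x ∈ D (m + 1) := hDm (by omega) hx.1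
    have hym1 : y ∈ D (m + 1) := hD m hy.1
    rcases eq_or_lt_of_le hkm with rfl | hlt
    · -- same layer
      by_cases hxM : x ∈ M k <;> by_cases hyM : y ∈ M k <;>
        simp only [if_pos, if_neg, hxM, hyM, if_true, if_false] at hG
      · exact (hInv k).2.2.1 hxM hyM hG
      · exact absurd ((hρPB k x hxM).1) (fun hp =>
          Set.disjoint_left.mp (hPg k) hp ⟨y, hym1, by rw [hG]⟩)
      · exact absurd ((hρPB k y hyM).1) (fun hp =>
          Set.disjoint_left.mp (hPg k) hp ⟨x, hxm1, hG⟩)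
      · exact hinj (k + 1) hxk1 hym1 hG
    · -- k < m
      have hBx : g (m + 1) x ≠ g (k + 1) x → g (k + 1) x ∈ B m := by
        intro hne
        exact hBsub2 k m hlt ⟨x, ⟨hxk1, hne⟩, rfl⟩
      by_cases hxM : x ∈ M k <;> by_cases hyM : y ∈ M m <;>
        simp only [if_pos, if_neg, hxM, hyM, if_true, if_false] at hG
      · -- both repaired : ρ k x ∈ B m but ρ m y ∉ B m
        exact absurd (hBsub1 k m hlt ⟨x, hxM, rfl⟩) (by rw [hG]; exact (hρPB m y hyM).2)
      · -- x repaired, y kept : ρ k x ∈ B m, g (m+1) y ∉ B m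
        have hyW := ((hMmem m y).mp |> fun f => f)
        have hyn : g (m + 1) y ∉ B m := by
          intro hmem
          exact hyM ((hMmem m y).mpr ⟨hy, Or.inl hmem⟩)
        exact absurd (hBsub1 k m hlt ⟨x, hxM, rfl⟩) (by rw [hG]; exact hyn)
      · -- x kept, y repaired
        by_cases hc : g (m + 1) x = g (k + 1) x
        · exact absurd ((hρPB m y hyM).1) (fun hp =>
            Set.disjoint_left.mp (hPg m) hp ⟨x, hxm1, by rw [hc, hG]⟩)
        · exact absurd (hBx hc) (by rw [hG]; exact (hρPB m y hyM).2)
      · -- both kept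
        have hyn : g (m + 1) y ∉ B m := by
          intro hmem
          exact hyM ((hMmem m y).mpr ⟨hy, Or.inl hmem⟩)
        by_cases hc : g (m + 1) x = g (k + 1) x
        · exact hinj (m + 1) hxm1 hym1 (by rw [hc, hG])
        · exact absurd (hBx hc) (by rw [hG]; exact hyn)
  refine ⟨G, ?_, ?_, ?_⟩
  · -- injectivity
    intro x hx y hy hG
    have hxe : ∃ k, x ∈ D k := Set.mem_iUnion.mp hx
    have hye : ∃ k, y ∈ D k := Set.mem_iUnion.mp hy
    have hx' := hLamFind x hxe
    have hy' := hLamFind y hye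
    rcases le_total (Nat.find hxe) (Nat.find hye) with h | h
    · exact hMain _ _ h x hx' y hy' hG
    · exact (hMain _ _ h y hy' x hx' hG.symm).symm
  · -- coherence
    intro k
    have hbig : {x | x ∈ D k ∧ G x ≠ g k x} ⊆
        ⋃ j ∈ Finset.range (k + 1),
          (M j ∪ {x | x ∈ D j ∧ g (j + 1) x ≠ g j x} ∪ {x | x ∈ D j ∧ g k x ≠ g j x}) := by
      rintro x ⟨hxD, hxG⟩
      have h : ∃ n, x ∈ D n := ⟨k, hxD⟩
      have hj : Nat.find h ≤ k := Nat.find_le hxD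
      have hxL := hLamFind x h
      set j := Nat.find h with hjdef
      have hmem : j ∈ Finset.range (k + 1) := Finset.mem_range.mpr (by omega)
      by_cases hxM : x ∈ M j
      · exact Set.mem_biUnion hmem (Or.inl (Or.inl hxM))
      · have hGx : G x = g (j + 1) x := by rw [hGval x j hxL, if_neg hxM]
        by_cases hc : g (j + 1) x = g j x
        · refine Set.mem_biUnion hmem (Or.inr ⟨hxL.1, ?_⟩)
          rw [← hc, ← hGx]; exact fun hh => hxG hh.symm
        · exact Set.mem_biUnion hmem (Or.inl (Or.inr ⟨hxL.1, hc⟩))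
    refine Set.Finite.subset ?_ hbig
    apply Set.Finite.biUnion (Finset.range (k + 1)).finite_toSet
    intro j hj
    have hj' : j ≤ k := by
      have := Finset.mem_range.mp hj; omega
    exact ((hInv j).2.1.union (hcoh j (j + 1) (by omega))).union (hcoh j k hj')
  · -- range in W
    rintro _ ⟨x, hx, rfl⟩
    have h : ∃ k, x ∈ D k := Set.mem_iUnion.mp hx
    have hxL := hLamFind x h
    by_cases hxM : x ∈ M (Nat.find h)
    · rw [hGval x _ hxL, if_pos hxM]
      exact hPW _ ((hρPB _ x hxM).1)
    · rw [hGval x _ hxL, if_neg hxM]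
      by_contra hW
      exact hxM ((hMmem _ x).mpr ⟨hxL, Or.inr hW⟩)

end AmalgSec

/-! ### The main transfinite construction -/

open scoped Ordinal

/-- Range of the partial family below `α`. -/
def Ran (f : Ordinal → ℕ → ℕ) (α : Ordinal) : Set ℕ :=
  (fun p : Ordinal × ℕ => f p.1 p.2) '' {p : Ordinal × ℕ | p.1 < α}

/-- The inductive requirements at stage `α`, relative to earlier stages `prev`. -/
def Good (A V : Ordinal → Set ℕ) (α : Ordinal) (prev : Ordinal → Ordinal → ℕ → ℕ)
    (f : Ordinal → ℕ → ℕ) : Prop :=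
  Set.InjOn (fun p : Ordinal × ℕ => f p.1 p.2) {p : Ordinal × ℕ | p.1 < α} ∧
  (∀ β < α, {p : Ordinal × ℕ | p.1 < β ∧ f p.1 p.2 ≠ prev β p.1 p.2}.Finite) ∧
  (Ran f α \ V α).Finite ∧
  ∀ ξ, α = ξ + 1 → EqStar (A ξ) (Set.range (f ξ))

theorem Good_congr {A V : Ordinal → Set ℕ} {α : Ordinal}
    {p q : Ordinal → Ordinal → ℕ → ℕ} {f : Ordinal → ℕ → ℕ}
    (h : ∀ β < α, p β = q β) : Good A V α p f ↔ Good A V α q f := by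
  unfold Good
  constructor <;> rintro ⟨h1, h2, h3, h4⟩ <;> refine ⟨h1, ?_, h3, h4⟩ <;> intro β hβ <;>
    [rw [← h β hβ]; rw [h β hβ]] <;> exact h2 β hβ

open Classical in
noncomputable def F (A V : Ordinal → Set ℕ) : Ordinal → Ordinal → ℕ → ℕ
  | α =>
    if h : ∃ f, Good A V α (fun β => if _hb : β < α then F A V β else fun _ _ => 0) f
    then h.choose else fun _ _ => 0
termination_by α => α
decreasing_by all_goals exact _hb

theorem F_good {A V : Ordinal → Set ℕ} {α : Ordinal}
    (h : ∃ f, Good A V α (F A V) f) : Good A V α (F A V) (F A V α) := by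
  classical
  have hre : ∀ f, Good A V α (fun β => if _hb : β < α then F A V β else fun _ _ => 0) f
      ↔ Good A V α (F A V) f :=
    fun f => Good_congr (fun β hβ => dif_pos hβ)
  have h' : ∃ f, Good A V α (fun β => if _hb : β < α then F A V β else fun _ _ => 0) f := by
    obtain ⟨f, hf⟩ := h
    exact ⟨f, (hre f).mpr hf⟩
  have : F A V α = h'.choose := by
    rw [F]
    rw [dif_pos h']
  rw [this]
  exact (hre _).mp h'.choose_spec

theorem F_isGood (A V : Ordinal → Set ℕ)
    (hAinf : ∀ ξ < omega1, (A ξ).Infinite)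
    (hVmono : ∀ α < omega1, ∀ β < omega1, α < β → (V α \ V β).Finite)
    (hV1 : ∀ ξ α : Ordinal, ξ < α → α < omega1 → (A ξ \ V α).Finite)
    (hV2 : ∀ α ξ : Ordinal, α ≤ ξ → ξ < omega1 → (A ξ ∩ V α).Finite) :
    ∀ α < omega1, Good A V α (F A V) (F A V α) := by
  intro α
  induction α using Ordinal.induction with
  | h α IH =>
  intro hα
  apply F_good
  rcases Ordinal.zero_or_succ_or_isSuccLimit α with rfl | ⟨ξ, rfl⟩ | hlim
  · -- zero case
    refine ⟨fun _ _ => 0, fun p hp => absurd hp (not_lt_zero (a := p.1)),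
      fun β hβ => absurd hβ not_lt_zero, ?_, ?_⟩
    · have he : Ran (fun _ _ => (0 : ℕ)) 0 = ∅ := by
        apply Set.image_eq_empty.mpr
        ext p; simp [not_lt_zero]
      rw [he]
      simp
    · intro ξ h
      exact absurd (by rw [← Ordinal.add_one_eq_succ]; exact h.symm) (Ordinal.succ_ne_zero ξ)
  · -- successor case
    rw [← Ordinal.add_one_eq_succ] at hα ⊢
    have hξω : ξ < omega1 := lt_trans (by rw [Ordinal.add_one_eq_succ]; exact Order.lt_succ ξ) hα
    have hG := IH ξ (Order.lt_succ ξ) hξω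
    have hsucc_cases : ∀ γ : Ordinal, γ < ξ + 1 → γ < ξ ∨ γ = ξ := by
      intro γ h
      rw [Ordinal.add_one_eq_succ] at h
      exact (Order.lt_succ_iff.mp h).lt_or_eq
    obtain ⟨Ginj, Gcoh, Gran, _⟩ := hG
    set S : Set ℕ := A ξ \ Ran (F A V ξ) ξ with hSdef
    have hT : ((A ξ ∩ V ξ) ∪ (Ran (F A V ξ) ξ \ V ξ)).Finite :=
      (hV2 ξ ξ le_rfl hξω).union Gran
    have hsub : A ξ \ S ⊆ (A ξ ∩ V ξ) ∪ (Ran (F A V ξ) ξ \ V ξ) := by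
      intro x hx
      have hxA : x ∈ A ξ := hx.1
      have hxR : x ∈ Ran (F A V ξ) ξ := by
        by_contra hc
        exact hx.2 ⟨hxA, hc⟩
      by_cases hv : x ∈ V ξ
      · exact Or.inl ⟨hxA, hv⟩
      · exact Or.inr ⟨hxR, hv⟩
    have hAS : (A ξ \ S).Finite := hT.subset hsub
    have hSinf : S.Infinite := by
      have h1 : A ξ \ ((A ξ ∩ V ξ) ∪ (Ran (F A V ξ) ξ \ V ξ)) ⊆ S := by
        intro x hx
        refine ⟨hx.1, fun hR => ?_⟩
        by_cases hv : x ∈ V ξ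
        · exact hx.2 (Or.inl ⟨hx.1, hv⟩)
        · exact hx.2 (Or.inr ⟨hR, hv⟩)
      exact (((hAinf ξ hξω).diff hT).mono h1)
    haveI := hSinf.to_subtype
    haveI : Countable ↥S := Set.to_countable S
    obtain ⟨q⟩ : Nonempty (ℕ ≃ ↥S) := inferInstance
    set e : ℕ → ℕ := fun n => (q n : ℕ) with hedef
    have he_range : Set.range e = S := by
      have : e = Subtype.val ∘ q := rfl
      rw [this, q.surjective.range_comp, Subtype.range_coe]
    have he_inj : Function.Injective e := fun n m h =>
      q.injective (Subtype.ext h)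
    refine ⟨Function.update (F A V ξ) ξ e, ?_, ?_, ?_, ?_⟩
    · -- injectivity
      rintro ⟨p1, p2⟩ hp ⟨q1, q2⟩ hq hval
      have hp' : p1 < ξ ∨ p1 = ξ := hsucc_cases p1 hp
      have hq' : q1 < ξ ∨ q1 = ξ := hsucc_cases q1 hq
      simp only at hval
      rcases hp' with hp' | hp' <;> rcases hq' with hq' | hq'
      · rw [Function.update_of_ne (ne_of_lt hp'), Function.update_of_ne (ne_of_lt hq')] at hval
        exact Ginj hp' hq' hval
      · subst hq'
        rw [Function.update_of_ne (ne_of_lt hp'), Function.update_self] at hval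
        exfalso
        have : e q2 ∈ S := by rw [← he_range]; exact ⟨q2, rfl⟩
        exact this.2 ⟨(p1, p2), hp', hval⟩
      · subst hp'
        rw [Function.update_self, Function.update_of_ne (ne_of_lt hq')] at hval
        exfalso
        have : e p2 ∈ S := by rw [← he_range]; exact ⟨p2, rfl⟩
        exact this.2 ⟨(q1, q2), hq', hval.symm⟩
      · subst hp'; subst hq'
        rw [Function.update_self] at hval
        rw [he_inj hval]
    · -- coherence
      intro β hβ
      rcases hsucc_cases β hβ with hβ' | rfl
      · refine ((Gcoh β hβ').subset ?_)
        rintro ⟨p1, p2⟩ ⟨h1, h2⟩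
        have h1' : p1 < β := h1
        refine ⟨h1, ?_⟩
        have hne : p1 ≠ ξ := ne_of_lt (lt_trans h1' hβ')
        rwa [Function.update_of_ne hne] at h2
      · refine Set.Finite.subset (Set.finite_empty) ?_
        rintro ⟨p1, p2⟩ ⟨h1, h2⟩
        have h1' : p1 < β := h1
        exact absurd rfl (by rwa [Function.update_of_ne (ne_of_lt h1')] at h2)
    · -- range control
      have hsub2 : Ran (Function.update (F A V ξ) ξ e) (ξ + 1) \ V (ξ + 1) ⊆
          (Ran (F A V ξ) ξ \ V ξ) ∪ (V ξ \ V (ξ + 1)) ∪ (A ξ \ V (ξ + 1)) := by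
        rintro v ⟨⟨⟨p1, p2⟩, hp, hpv⟩, hv⟩
        rcases hsucc_cases p1 hp with hp' | hp'
        · rw [show (fun p : Ordinal × ℕ => Function.update (F A V ξ) ξ e p.1 p.2) (p1, p2)
              = F A V ξ p1 p2 from by
            simp only; rw [Function.update_of_ne (ne_of_lt hp')]] at hpv
          by_cases hVξ : v ∈ V ξ
          · exact Or.inl (Or.inr ⟨hVξ, hv⟩)
          · exact Or.inl (Or.inl ⟨⟨(p1, p2), hp', hpv⟩, hVξ⟩)
        · subst hp'
          rw [show (fun p : Ordinal × ℕ => Function.update (F A V p1) p1 e p.1 p.2) (p1, p2)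
              = e p2 from by simp only; rw [Function.update_self]] at hpv
          refine Or.inr ⟨?_, hv⟩
          have : e p2 ∈ S := by rw [← he_range]; exact ⟨p2, rfl⟩
          rw [← hpv]
          exact this.1
      refine Set.Finite.subset ?_ hsub2
      have hlt : ξ < ξ + 1 := by rw [Ordinal.add_one_eq_succ]; exact Order.lt_succ ξ
      exact ((Gran.union (hVmono ξ hξω (ξ + 1) hα hlt)).union (hV1 ξ (ξ + 1) hlt hα))
    · -- block condition
      intro ξ' hξ'
      have hξξ : ξ' = ξ := by
        rw [Ordinal.add_one_eq_succ ξ', Ordinal.add_one_eq_succ ξ] at hξ'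
        exact (Order.succ_injective (α := Ordinal) hξ').symm
      subst hξξ
      rw [Function.update_self]
      unfold EqStar
      rw [he_range]
      refine Set.Finite.union hAS ?_
      have hS0 : S \ A ξ' = ∅ := Set.diff_eq_empty.mpr Set.diff_subset
      rw [hS0]
      exact Set.finite_empty
  · -- limit case
    -- a monotone cofinal ω-sequence below α
    have hcard : α.card < Cardinal.aleph 1 := Cardinal.lt_ord.mp hα
    have haleph : Cardinal.aleph 1 = Order.succ Cardinal.aleph0 := by
      rw [← Cardinal.aleph_zero, ← Cardinal.aleph_succ, Ordinal.succ_zero]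
    have hcard' : α.card ≤ Cardinal.aleph0 := by
      rw [haleph] at hcard
      exact Order.lt_succ_iff.mp hcard
    haveI : Countable α.ToType := Cardinal.mk_le_aleph0_iff.mp
      (by rw [Cardinal.mk_toType]; exact hcard')
    haveI : Countable ↥(Set.Iio α) :=
      Countable.of_equiv _ (Ordinal.ToType.mk (o := α)).toEquiv.symm
    have hcnt : (Set.Iio α).Countable := Set.countable_coe_iff.mp inferInstance
    obtain ⟨φ, hφ⟩ := hcnt.exists_eq_range ⟨0, hlim.pos⟩
    have hφlt : ∀ n, φ n < α := by
      intro n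
      have : φ n ∈ Set.Iio α := by rw [hφ]; exact ⟨n, rfl⟩
      exact this
    set c : ℕ → Ordinal := fun n => (Finset.range n).sup (fun i => φ i + 1) with hcdef
    have hclt : ∀ n, c n < α := by
      intro n
      refine Finset.sup_lt_iff (by exact hlim.pos) |>.mpr ?_
      intro i _
      rw [Ordinal.add_one_eq_succ]
      exact hlim.succ_lt (hφlt i)
    have hcmono : Monotone c := fun m n h =>
      Finset.sup_mono (Finset.range_subset_range.mpr h)
    have hccof : ∀ β < α, ∃ n, β < c n := by
      intro β hβ
      have : β ∈ Set.Iio α := hβ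
      rw [hφ] at this
      obtain ⟨i, rfl⟩ := this
      refine ⟨i + 1, ?_⟩
      have : φ i + 1 ≤ c (i + 1) :=
        Finset.le_sup (f := fun i => φ i + 1) (Finset.self_mem_range_succ i)
      exact lt_of_lt_of_le (by rw [Ordinal.add_one_eq_succ]; exact Order.lt_succ _) this
    have hcω : ∀ n, c n < omega1 := fun n => lt_trans (hclt n) hα
    have Gck : ∀ n, Good A V (c n) (F A V) (F A V (c n)) := fun n => IH (c n) (hclt n) (hcω n)
    -- apply the amalgamation lemma
    set Dk : ℕ → Set (Ordinal × ℕ) := fun k => {p | p.1 < c k} with hDkdef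
    set gk : ℕ → Ordinal × ℕ → ℕ := fun k p => F A V (c k) p.1 p.2 with hgkdef
    set Pk : ℕ → Set ℕ := fun k => (A (c (k + 1)) ∩ V α) \ (gk (k + 1) '' Dk (k + 1))
      with hPkdef
    have hImgRan : ∀ k, gk k '' Dk k = Ran (F A V (c k)) (c k) := fun k => rfl
    obtain ⟨G, hGinj, hGcoh, hGW⟩ :=
      amalg gk Dk (V α) Pk
        (fun k => fun p hp => lt_of_lt_of_le hp (hcmono (Nat.le_succ k)))
        (fun k => (Gck k).1)
        (by
          intro m k hmk
          rcases (hcmono hmk).lt_or_eq with hc | hc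
          · exact (Gck k).2.1 (c m) hc
          · refine Set.Finite.subset Set.finite_empty ?_
            rintro p ⟨_, hne⟩
            exact absurd (by rw [hgkdef]; simp only; rw [hc]) hne)
        (by
          intro k
          rw [hImgRan k]
          refine Set.Finite.subset (((Gck k).2.2.1).union
            (hVmono (c k) (hcω k) α hα (hclt k))) ?_
          intro v hv
          by_cases hvc : v ∈ V (c k)
          · exact Or.inr ⟨hvc, hv.2⟩
          · exact Or.inl ⟨hv.1, hvc⟩)
        (by
          intro k
          have hfin : ((A (c (k + 1)) \ V α) ∪ ((A (c (k + 1)) ∩ V (c (k + 1)))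
              ∪ (Ran (F A V (c (k + 1))) (c (k + 1)) \ V (c (k + 1))))).Finite :=
            (hV1 (c (k + 1)) α (hclt (k + 1)) hα).union
              ((hV2 (c (k + 1)) (c (k + 1)) le_rfl (hcω (k + 1))).union ((Gck (k + 1)).2.2.1))
          refine ((hAinf (c (k + 1)) (hcω (k + 1))).diff hfin).mono ?_
          intro v hv
          refine ⟨⟨hv.1, ?_⟩, ?_⟩
          · by_contra hvV
            exact hv.2 (Or.inl ⟨hv.1, hvV⟩)
          · rw [hImgRan]
            intro hvR
            by_cases hvc : v ∈ V (c (k + 1))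
            · exact hv.2 (Or.inr (Or.inl ⟨hv.1, hvc⟩))
            · exact hv.2 (Or.inr (Or.inr ⟨hvR, hvc⟩)))
        (fun k => fun v hv => hv.1.2)
        (fun k => Set.disjoint_sdiff_left)
    refine ⟨fun ξ n => G (ξ, n), ?_, ?_, ?_, ?_⟩
    · -- injectivity
      have hU : {p : Ordinal × ℕ | p.1 < α} = ⋃ k, Dk k := by
        ext p
        simp only [Set.mem_iUnion, Set.mem_setOf_eq]
        constructor
        · intro hp
          obtain ⟨n, hn⟩ := hccof p.1 hp
          exact ⟨n, hn⟩
        · rintro ⟨n, hn⟩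
          exact lt_trans hn (hclt n)
      have : (fun p : Ordinal × ℕ => G (p.1, p.2)) = G := rfl
      rw [hU]
      exact hGinj
    · -- coherence
      intro β hβ
      obtain ⟨n, hn⟩ := hccof β hβ
      refine Set.Finite.subset ((hGcoh n).union ((Gck n).2.1 β hn)) ?_
      rintro ⟨p1, p2⟩ ⟨h1, h2⟩
      have hp : (p1, p2) ∈ Dk n := lt_trans h1 hn
      by_cases hg : G (p1, p2) = gk n (p1, p2)
      · have hg' : G (p1, p2) = F A V (c n) p1 p2 := hg
        refine Or.inr ⟨h1, ?_⟩
        rw [← hg']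
        exact h2
      · exact Or.inl ⟨hp, hg⟩
    · -- range
      refine Set.Finite.subset Set.finite_empty ?_
      rintro v ⟨⟨p, hp, rfl⟩, hv⟩
      refine absurd ?_ hv
      apply hGW
      refine ⟨p, ?_, rfl⟩
      simp only [Set.mem_iUnion]
      obtain ⟨n, hn⟩ := hccof p.1 hp
      exact ⟨n, hn⟩
    · -- not a successor
      intro ξ h
      exfalso
      have h1 : ξ < α := by
        rw [h, Ordinal.add_one_eq_succ]
        exact Order.lt_succ ξ
      have h2 := hlim.succ_lt h1
      rw [h, Ordinal.add_one_eq_succ] at h2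
      exact lt_irrefl _ h2


def toNatO (o : Ordinal) : ℕ :=
  if h : o < Ordinal.omega0 then (Ordinal.lt_omega0.mp h).choose else 0

theorem toNatO_spec {o : Ordinal} (h : o < Ordinal.omega0) :
    ((toNatO o : ℕ) : Ordinal) = o := by
  unfold toNatO
  rw [dif_pos h]
  exact (Ordinal.lt_omega0.mp h).choose_spec.symm

/-- if an almost disjoint family `{A_ξ : ξ < ω₁}` of infinite subsets of
`ℕ` admits a `⊆*`-increasing sequence `(V_α)` separating `{A_ξ : ξ < α}` from
`{A_ξ : ξ ≥ α}`, then there is a coherent family `{s_α}` with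
`A_ξ =* s_{ξ+1}[[ω·ξ, ω·ξ+ω)]` for every `ξ < ω₁`. -/
theorem stmt11 (A : Ordinal → Set ℕ)
    (hAinf : ∀ ξ < omega1, (A ξ).Infinite)
    (hAD : ∀ ξ < omega1, ∀ η < omega1, ξ ≠ η → (A ξ ∩ A η).Finite)
    (V : Ordinal → Set ℕ)
    (hVmono : ∀ α < omega1, ∀ β < omega1, α < β → (V α \ V β).Finite)
    (hV1 : ∀ ξ α : Ordinal, ξ < α → α < omega1 → (A ξ \ V α).Finite)
    (hV2 : ∀ α ξ : Ordinal, α ≤ ξ → ξ < omega1 → (A ξ ∩ V α).Finite) :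
    ∃ s : Ordinal → Ordinal → ℕ, IsCoherentFamily s ∧
      ∀ ξ < omega1,
        EqStar (A ξ)
          (s (ξ + 1) '' Set.Ico (Ordinal.omega0 * ξ) (Ordinal.omega0 * ξ + Ordinal.omega0)) := by
  classical
  have hω₁ : Order.IsSuccLimit omega1 := Cardinal.isSuccLimit_ord (Cardinal.aleph0_le_aleph 1)
  have hFgood := F_isGood A V hAinf hVmono hV1 hV2
  set π : Ordinal → Ordinal × ℕ :=
    fun γ => (γ / Ordinal.omega0, toNatO (γ % Ordinal.omega0)) with hπdef
  have hmodlt : ∀ γ : Ordinal, γ % Ordinal.omega0 < Ordinal.omega0 :=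
    fun γ => Ordinal.mod_lt γ Ordinal.omega0_ne_zero
  have hπinj : Function.Injective π := by
    intro γ1 γ2 h
    have h1 : γ1 / Ordinal.omega0 = γ2 / Ordinal.omega0 := congrArg Prod.fst h
    have h2 : toNatO (γ1 % Ordinal.omega0) = toNatO (γ2 % Ordinal.omega0) :=
      congrArg Prod.snd h
    have e1 := toNatO_spec (hmodlt γ1)
    have e2 := toNatO_spec (hmodlt γ2)
    have hmods : γ1 % Ordinal.omega0 = γ2 % Ordinal.omega0 := by
      rw [← e1, ← e2, h2]
    calc γ1 = Ordinal.omega0 * (γ1 / Ordinal.omega0) + γ1 % Ordinal.omega0 :=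
          (Ordinal.div_add_mod γ1 Ordinal.omega0).symm
      _ = Ordinal.omega0 * (γ2 / Ordinal.omega0) + γ2 % Ordinal.omega0 := by
          rw [h1, hmods]
      _ = γ2 := Ordinal.div_add_mod γ2 Ordinal.omega0
  refine ⟨fun α γ => F A V α (π γ).1 (π γ).2, ?_, ?_⟩
  · -- coherent family
    intro α hα
    obtain ⟨Ginj, Gcoh, -, -⟩ := hFgood α hα
    constructor
    · intro γ1 h1 γ2 h2 heq
      have hp1 : π γ1 ∈ {p : Ordinal × ℕ | p.1 < α} :=
        (Ordinal.div_lt Ordinal.omega0_ne_zero).mpr h1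
      have hp2 : π γ2 ∈ {p : Ordinal × ℕ | p.1 < α} :=
        (Ordinal.div_lt Ordinal.omega0_ne_zero).mpr h2
      exact hπinj (Ginj hp1 hp2 heq)
    · intro β hβ
      refine Set.Finite.of_finite_image (f := π) (Set.Finite.subset (Gcoh β hβ) ?_)
        (hπinj.injOn)
      rintro _ ⟨γ, hγ, rfl⟩
      exact ⟨(Ordinal.div_lt Ordinal.omega0_ne_zero).mpr hγ.1, hγ.2⟩
  · -- block condition
    intro ξ hξ
    have hξ1 : ξ + 1 < omega1 := by
      rw [Ordinal.add_one_eq_succ]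
      exact hω₁.succ_lt hξ
    obtain ⟨-, -, -, hblk⟩ := hFgood (ξ + 1) hξ1
    have himg : (fun γ => F A V (ξ + 1) (π γ).1 (π γ).2) ''
        Set.Ico (Ordinal.omega0 * ξ) (Ordinal.omega0 * ξ + Ordinal.omega0)
        = Set.range (F A V (ξ + 1) ξ) := by
      apply Set.Subset.antisymm
      · rintro _ ⟨γ, ⟨hγ1, hγ2⟩, rfl⟩
        have hdiv : γ / Ordinal.omega0 = ξ := by
          apply le_antisymm
          · have hlt : γ < Ordinal.omega0 * (ξ + 1) := by
              rw [mul_add_one]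
              exact hγ2
            have := (Ordinal.div_lt Ordinal.omega0_ne_zero).mpr hlt
            rw [Ordinal.add_one_eq_succ] at this
            exact Order.lt_succ_iff.mp this
          · exact (Ordinal.le_div Ordinal.omega0_ne_zero).mpr hγ1
        refine ⟨toNatO (γ % Ordinal.omega0), ?_⟩
        simp only [hπdef]
        rw [hdiv]
      · rintro _ ⟨n, rfl⟩
        refine ⟨Ordinal.omega0 * ξ + n,
          ⟨le_self_add, (add_lt_add_iff_left _).mpr (Ordinal.nat_lt_omega0 n)⟩, ?_⟩
        have hdiv : (Ordinal.omega0 * ξ + n) / Ordinal.omega0 = ξ := by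
          rw [Ordinal.mul_add_div ξ Ordinal.omega0_ne_zero,
            Ordinal.div_eq_zero_of_lt (Ordinal.nat_lt_omega0 n), add_zero]
        have hmod : (Ordinal.omega0 * ξ + n) % Ordinal.omega0 = (n : Ordinal) := by
          rw [Ordinal.mul_add_mod_self, Ordinal.mod_eq_of_lt (Ordinal.nat_lt_omega0 n)]
        have hto : toNatO ((Ordinal.omega0 * ξ + ↑n) % Ordinal.omega0) = n := by
          rw [hmod]
          have := toNatO_spec (Ordinal.nat_lt_omega0 n)
          exact Nat.cast_inj.mp this
        simp only [hπdef]
        rw [hdiv, hto]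
    rw [himg]
    exact hblk ξ rfl
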